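/- For integers Q ≥ 2 and real φ with 1 + φQ ≠ 0, the double sum over q from 1 to Q and j from 1 to Q+1 of (Q·𝟙(j > q) − j + 1 + φQ(2q − Q − 1)/(2(1 + φQ))) · 𝟙(j > q) equals Q(φQ³ + 2Q² − φQ − 2)/(12(1 + φQ)). -/

import Mathlib

open Finset

lemma sumR1 (n : ℕ) : ∑ i ∈ range n, ((i : ℝ) + 1) = (n : ℝ) * (n + 1) / 2 := by
  induction n with
  | zero => simp
  | succ n ih => rw [Finset.sum_range_succ, ih]; push_cast; field_simp; ring

lemma sumR2 (n : ℕ) : ∑ i ∈ range n, ((i : ℝ) + 1) ^ 2 = (n : ℝ) * (n + 1) * (2 * n + 1) / 6 := by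
  induction n with
  | zero => simp
  | succ n ih => rw [Finset.sum_range_succ, ih]; push_cast; field_simp; ring

lemma gen (A B : ℝ) (n : ℕ) :
    ∑ i ∈ range n,
      ((A - (i + 1)) * (A - (i + 1) + 1) / 2 + (A + 1 - (i + 1)) * (B * (2 * (i + 1) - A - 1)))
    = (n : ℝ) * (A ^ 2 + A) / 2 - (2 * A + 1) * n * (n + 1) / 4 + n * (n + 1) * (2 * n + 1) / 12
      + B * (3 * (A + 1) * n * (n + 1) / 2 - n * (A + 1) ^ 2 - n * (n + 1) * (2 * n + 1) / 3) := by
  induction n with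
  | zero => simp
  | succ n ih => rw [Finset.sum_range_succ, ih]; push_cast; field_simp; ring

theorem stmt1 (Q : ℕ) (hQ : 2 ≤ Q) (φ : ℝ) (hφ : 1 + φ * Q ≠ 0) :
    ∑ q ∈ Finset.Icc 1 Q, ∑ j ∈ Finset.Icc 1 (Q + 1),
      ((Q : ℝ) * (if q < j then 1 else 0) - j + 1 +
          φ * Q * (2 * q - Q - 1) / (2 * (1 + φ * Q))) *
        (if q < j then 1 else 0)
      = Q * (φ * Q ^ 3 + 2 * Q ^ 2 - φ * Q - 2) / (12 * (1 + φ * Q)) := by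
  set B : ℝ := φ * Q / (2 * (1 + φ * Q)) with hB
  -- Step 1: compute the inner sum for each q in Icc 1 Q
  have inner : ∀ q ∈ Finset.Icc 1 Q,
      ∑ j ∈ Finset.Icc 1 (Q + 1),
        ((Q : ℝ) * (if q < j then 1 else 0) - j + 1 +
            φ * Q * (2 * q - Q - 1) / (2 * (1 + φ * Q))) * (if q < j then 1 else 0)
      = ((Q : ℝ) - q) * ((Q : ℝ) - q + 1) / 2 + ((Q : ℝ) + 1 - q) * (B * (2 * q - Q - 1)) := by
    intro q hq
    rw [Finset.mem_Icc] at hq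
    have h1 : ∀ j, ((Q : ℝ) * (if q < j then 1 else 0) - j + 1 +
          φ * Q * (2 * q - Q - 1) / (2 * (1 + φ * Q))) * (if q < j then (1:ℝ) else 0)
        = if q < j then ((Q : ℝ) + 1 + B * (2 * q - Q - 1) - j) else 0 := by
      intro j
      split_ifs with h
      · rw [hB]; ring
      · ring
    simp only [h1]
    rw [← Finset.sum_filter]
    have h2 : (Finset.Icc 1 (Q + 1)).filter (fun j => q < j) = Finset.Icc (q + 1) (Q + 1) := by
      ext a; simp only [Finset.mem_filter, Finset.mem_Icc]; omega
    rw [h2]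
    have h3 : Finset.Icc (q + 1) (Q + 1) = Finset.Ico (q + 1) (Q + 2) := by
      rw [← Finset.Ico_add_one_right_eq_Icc]; rfl
    rw [h3, Finset.sum_Ico_eq_sum_range]
    have h4 : Q + 2 - (q + 1) = Q + 1 - q := by omega
    rw [h4]
    have h5 : ∀ i ∈ range (Q + 1 - q), ((Q : ℝ) + 1 + B * (2 * q - Q - 1) - ((q + 1 + i : ℕ) : ℝ))
        = ((Q : ℝ) + B * (2 * q - Q - 1) - q) - i := by
      intro i _; push_cast; ring_nf
    rw [Finset.sum_congr rfl h5, Finset.sum_sub_distrib, Finset.sum_const, Finset.card_range]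
    have h6 : ∑ i ∈ range (Q + 1 - q), (i : ℝ)
        = (∑ i ∈ range (Q + 1 - q), ((i : ℝ) + 1)) - (Q + 1 - q : ℕ) := by
      rw [Finset.sum_add_distrib, Finset.sum_const, Finset.card_range]; push_cast; ring
    rw [h6, sumR1]
    have hq' : q ≤ Q + 1 := by omega
    simp only [Nat.cast_sub hq', Nat.cast_add, Nat.cast_one, nsmul_eq_mul]
    ring
  rw [Finset.sum_congr rfl inner]
  -- Step 2: reindex the outer sum and apply gen
  have h8 : Finset.Icc 1 Q = Finset.Ico 1 (Q + 1) := by rw [Finset.Ico_add_one_right_eq_Icc]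
  rw [h8, Finset.sum_Ico_eq_sum_range]
  have h9 : Q + 1 - 1 = Q := by omega
  rw [h9]
  have h10 : ∀ i ∈ range Q,
      ((Q : ℝ) - (1 + i : ℕ)) * ((Q : ℝ) - (1 + i : ℕ) + 1) / 2 +
        ((Q : ℝ) + 1 - (1 + i : ℕ)) * (B * (2 * (1 + i : ℕ) - Q - 1))
      = ((Q : ℝ) - ((i : ℝ) + 1)) * ((Q : ℝ) - ((i : ℝ) + 1) + 1) / 2 +
        ((Q : ℝ) + 1 - ((i : ℝ) + 1)) * (B * (2 * ((i : ℝ) + 1) - Q - 1)) := by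
    intro i _; push_cast; ring
  rw [Finset.sum_congr rfl h10, gen (Q : ℝ) B Q]
  rw [hB]
  have hφ' : 1 + (Q:ℝ) * φ ≠ 0 := by rwa [mul_comm]
  field_simp
  ring
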